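/- Under the setup of the regret bound (N ≥ 1, J ≥ 2, τ > 0, π₀ interior to the simplex, c^j ≥ 0 with ‖c^j‖₂ ≤ R, f_j(y; z) = ⟨softmax(log π₀ + (z+y)/τ), c^j − y⟩, exact best-response iterates y^{j,(t)} ∈ [0, c^j] with f_j(y^{j,(t)}; Y^{-j,(t−1)}) ≥ f_j(ȳ; Y^{-j,(t−1)}) for all ȳ ∈ [0, c^j], where Y^{-j,(t)} = Σ_{k≠j} y^{k,(t)}, and a_t = max_{j∈[J]} ‖y^{j,(t)} − y^{j*}‖₂ for fixed y^{j*} ∈ [0, c^j]), suppose moreover that there exist C ≥ 0 and κ ∈ (0,1) with a_t ≤ C·κ^t for all t ≥ 0. Then for every j ∈ [J] and every T ≥ 1, the regret R_j(T) = sup_{ȳ∈[0,c^j]} Σ_{t=1}^T [f_j(ȳ; Y^{-j,(t)}) − f_j(y^{j,(t)}; Y^{-j,(t)})] satisfies R_j(T) ≤ 4·(R/τ + 1)·(J−1)·C/(1−κ); in particular the regret is bounded uniformly in T. -/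

import Mathlib

open Finset

/-- `softmax(u)_i = exp(u_i) / Σ_j exp(u_j)`. -/
noncomputable def softmax {N : ℕ} (u : Fin N → ℝ) : Fin N → ℝ :=
  fun i => Real.exp (u i) / ∑ j, Real.exp (u j)

/-- Principal's utility `f(y; z) = ⟨softmax(log π₀ + (z+y)/τ), c − y⟩`. -/
noncomputable def util {N : ℕ} (τ : ℝ) (π₀ c : Fin N → ℝ) (y z : Fin N → ℝ) : ℝ :=
  ∑ i, softmax (fun i => Real.log (π₀ i) + (z i + y i) / τ) i * (c i - y i)

lemma abs_le_sqrt_sum {N : ℕ} (x : Fin N → ℝ) (i : Fin N) :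
    |x i| ≤ Real.sqrt (∑ j, (x j) ^ 2) := by
  rw [← Real.sqrt_sq_eq_abs]
  exact Real.sqrt_le_sqrt (Finset.single_le_sum (fun j _ => sq_nonneg (x j)) (Finset.mem_univ i))

lemma softmax_lip {N : ℕ} (hN : 0 < N) (u d w : Fin N → ℝ) (R D : ℝ)
    (hw0 : ∀ i, 0 ≤ w i) (hwR : ∀ i, w i ≤ R) (hd : ∀ i, |d i| ≤ D) :
    |(∑ i, softmax (fun i => u i + d i) i * w i) - ∑ i, softmax u i * w i| ≤ R * D := by
  have hNe : Nonempty (Fin N) := ⟨⟨0, hN⟩⟩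
  have hR : 0 ≤ R := le_trans (hw0 (Classical.arbitrary _)) (hwR _)
  have hD : 0 ≤ D := le_trans (abs_nonneg _) (hd (Classical.arbitrary _))
  set S : ℝ → ℝ := fun s => ∑ i, Real.exp (u i + s * d i) with hSdef
  set Nm : ℝ → ℝ := fun s => ∑ i, w i * Real.exp (u i + s * d i) with hNmdef
  have hSpos : ∀ s, 0 < S s := fun s =>
    Finset.sum_pos (fun i _ => Real.exp_pos _) Finset.univ_nonempty
  have hder : ∀ i : Fin N, ∀ s : ℝ,
      HasDerivAt (fun s => Real.exp (u i + s * d i)) (Real.exp (u i + s * d i) * d i) s := by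
    intro i s
    have h1 : HasDerivAt (fun s : ℝ => u i + s * d i) (d i) s := by
      simpa using ((hasDerivAt_id s).mul_const (d i)).const_add (u i)
    simpa using h1.exp
  have hS : ∀ s, HasDerivAt S (∑ i, Real.exp (u i + s * d i) * d i) s := by
    intro s
    exact HasDerivAt.fun_sum (fun i _ => hder i s)
  have hNm : ∀ s, HasDerivAt Nm (∑ i, w i * (Real.exp (u i + s * d i) * d i)) s := by
    intro s
    exact HasDerivAt.fun_sum (fun i _ => (hder i s).const_mul (w i))
  have hphi : ∀ s : ℝ, HasDerivAt (fun s => Nm s / S s)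
      (((∑ i, w i * (Real.exp (u i + s * d i) * d i)) * S s
        - Nm s * (∑ i, Real.exp (u i + s * d i) * d i)) / (S s) ^ 2) s := by
    intro s
    exact (hNm s).div (hS s) (ne_of_gt (hSpos s))
  have hbound : ∀ s : ℝ,
      |((∑ i, w i * (Real.exp (u i + s * d i) * d i)) * S s
        - Nm s * (∑ i, Real.exp (u i + s * d i) * d i)) / (S s) ^ 2| ≤ R * D := by
    intro s
    have hNm0 : 0 ≤ Nm s :=
      Finset.sum_nonneg fun i _ => mul_nonneg (hw0 i) (Real.exp_pos _).le
    have hNmR : Nm s ≤ R * S s := by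
      rw [Finset.mul_sum]
      exact Finset.sum_le_sum fun i _ =>
        mul_le_mul_of_nonneg_right (hwR i) (Real.exp_pos _).le
    have hnum : (∑ i, w i * (Real.exp (u i + s * d i) * d i)) * S s
        - Nm s * (∑ i, Real.exp (u i + s * d i) * d i)
        = ∑ i, (Real.exp (u i + s * d i) * d i) * (w i * S s - Nm s) := by
      rw [Finset.sum_mul, Finset.mul_sum, ← Finset.sum_sub_distrib]
      exact Finset.sum_congr rfl fun i _ => by ring
    have habs : |∑ i, (Real.exp (u i + s * d i) * d i) * (w i * S s - Nm s)|
        ≤ (R * D) * (S s) ^ 2 := by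
      refine le_trans (Finset.abs_sum_le_sum_abs _ _) ?_
      have : ∀ i : Fin N, |Real.exp (u i + s * d i) * d i * (w i * S s - Nm s)|
          ≤ Real.exp (u i + s * d i) * (D * (R * S s)) := by
        intro i
        rw [abs_mul, abs_mul, abs_of_pos (Real.exp_pos _)]
        have h1 : |d i| ≤ D := hd i
        have h2 : |w i * S s - Nm s| ≤ R * S s := by
          have hwi0 : 0 ≤ w i * S s := mul_nonneg (hw0 i) (hSpos s).le
          have hwiR : w i * S s ≤ R * S s :=
            mul_le_mul_of_nonneg_right (hwR i) (hSpos s).le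
          rw [abs_le]
          constructor <;> linarith
        have := mul_le_mul h1 h2 (abs_nonneg _) hD
        calc Real.exp (u i + s * d i) * |d i| * |w i * S s - Nm s|
            = Real.exp (u i + s * d i) * (|d i| * |w i * S s - Nm s|) := by ring
          _ ≤ Real.exp (u i + s * d i) * (D * (R * S s)) :=
            mul_le_mul_of_nonneg_left this (Real.exp_pos _).le
      refine le_trans (Finset.sum_le_sum fun i _ => this i) ?_
      rw [← Finset.sum_mul]
      have : (∑ i, Real.exp (u i + s * d i)) = S s := rfl
      rw [this]
      nlinarith [hSpos s]
    rw [hnum, abs_div, abs_of_pos (pow_pos (hSpos s) 2)]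
    rw [div_le_iff₀ (pow_pos (hSpos s) 2)]
    exact habs
  have hmvt := Convex.norm_image_sub_le_of_norm_hasDerivWithin_le
      (f := fun s => Nm s / S s)
      (f' := fun s => ((∑ i, w i * (Real.exp (u i + s * d i) * d i)) * S s
        - Nm s * (∑ i, Real.exp (u i + s * d i) * d i)) / (S s) ^ 2)
      (s := Set.univ) (C := R * D)
      (fun x _ => (hphi x).hasDerivWithinAt)
      (fun x _ => by rw [Real.norm_eq_abs]; exact hbound x)
      convex_univ (Set.mem_univ (0 : ℝ)) (Set.mem_univ (1 : ℝ))
  have h0 : (∑ i, softmax u i * w i) = Nm 0 / S 0 := by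
    simp only [hNmdef, hSdef, softmax, zero_mul, add_zero]
    rw [Finset.sum_div]
    exact Finset.sum_congr rfl fun i _ => by ring
  have h1 : (∑ i, softmax (fun i => u i + d i) i * w i) = Nm 1 / S 1 := by
    simp only [hNmdef, hSdef, softmax, one_mul]
    rw [Finset.sum_div]
    exact Finset.sum_congr rfl fun i _ => by ring
  rw [h0, h1]
  have : ‖(1:ℝ) - 0‖ = 1 := by norm_num
  rw [Real.norm_eq_abs] at hmvt
  calc |Nm 1 / S 1 - Nm 0 / S 0| ≤ (R * D) * ‖(1:ℝ) - 0‖ := hmvt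
    _ = R * D := by rw [this, mul_one]

lemma util_lip {N : ℕ} (hN : 0 < N) (τ : ℝ) (hτ : 0 < τ) (π₀ cc ybar z z' : Fin N → ℝ)
    (R D : ℝ) (hw0 : ∀ i, 0 ≤ cc i - ybar i) (hwR : ∀ i, cc i - ybar i ≤ R)
    (hzz : ∀ i, |z i - z' i| ≤ D) :
    |util τ π₀ cc ybar z - util τ π₀ cc ybar z'| ≤ R * (D / τ) := by
  have key := softmax_lip hN (fun i => Real.log (π₀ i) + (z' i + ybar i) / τ)
      (fun i => (z i - z' i) / τ) (fun i => cc i - ybar i) R (D / τ) hw0 hwR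
      (fun i => by
        rw [abs_div, abs_of_pos hτ]
        exact div_le_div_of_nonneg_right (hzz i) hτ.le)
  have e1 : (fun i => (Real.log (π₀ i) + (z' i + ybar i) / τ) + (z i - z' i) / τ)
      = fun i => Real.log (π₀ i) + (z i + ybar i) / τ := by
    funext i; ring
  unfold util
  rw [← e1]
  exact key


/-- Linear (geometric-convergence) regime: if `a_t ≤ C·κ^t` with `κ ∈ (0,1)`,
then each principal's regret is bounded uniformly in `T` by
`4(R/τ+1)(J−1)C/(1−κ)`. -/
theorem stmt_16 (N J : ℕ) (hN : 1 ≤ N) (hJ : 2 ≤ J) (τ : ℝ) (hτ : 0 < τ)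
    (π₀ : Fin N → ℝ) (hπ₀pos : ∀ i, 0 < π₀ i) (hπ₀sum : ∑ i, π₀ i = 1)
    (c : Fin J → Fin N → ℝ) (R : ℝ)
    (hc0 : ∀ j i, 0 ≤ c j i) (hcR : ∀ j, Real.sqrt (∑ i, (c j i) ^ 2) ≤ R)
    (y : ℕ → Fin J → Fin N → ℝ)
    (hybox : ∀ t j i, 0 ≤ y t j i ∧ y t j i ≤ c j i)
    (Ym : ℕ → Fin J → Fin N → ℝ)
    (hYm : ∀ t j, Ym t j = ∑ k ∈ Finset.univ.erase j, y t k)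
    (hbr : ∀ t : ℕ, 1 ≤ t → ∀ j, ∀ ybar : Fin N → ℝ,
      (∀ i, 0 ≤ ybar i ∧ ybar i ≤ c j i) →
      util τ π₀ (c j) ybar (Ym (t - 1) j) ≤ util τ π₀ (c j) (y t j) (Ym (t - 1) j))
    (ystar : Fin J → Fin N → ℝ)
    (hystar : ∀ j i, 0 ≤ ystar j i ∧ ystar j i ≤ c j i)
    (a : ℕ → ℝ)
    (ha : ∀ t, a t = ⨆ j, Real.sqrt (∑ i, (y t j i - ystar j i) ^ 2))
    (C κ : ℝ) (hC : 0 ≤ C) (hκ0 : 0 < κ) (hκ1 : κ < 1)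
    (hgeo : ∀ t, a t ≤ C * κ ^ t)
    (Reg : Fin J → ℕ → ℝ)
    (hReg : ∀ j T, Reg j T = sSup {v : ℝ | ∃ ybar : Fin N → ℝ,
      (∀ i, 0 ≤ ybar i ∧ ybar i ≤ c j i) ∧
      v = ∑ t ∈ Finset.Icc 1 T,
        (util τ π₀ (c j) ybar (Ym t j) - util τ π₀ (c j) (y t j) (Ym t j))}) :
    ∀ j, ∀ T : ℕ, 1 ≤ T →
      Reg j T ≤ 4 * (R / τ + 1) * ((J : ℝ) - 1) * C / (1 - κ) := by
  intro j T hT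
  have hN' : 0 < N := hN
  have hR0 : 0 ≤ R := le_trans (Real.sqrt_nonneg _) (hcR j)
  have hJ1 : (1:ℝ) ≤ (J:ℝ) := by exact_mod_cast le_trans one_le_two hJ
  have hκ1' : (0:ℝ) < 1 - κ := by linarith
  have hRτ : (0:ℝ) ≤ R / τ := div_nonneg hR0 hτ.le
  have hRHS0 : 0 ≤ 4 * (R / τ + 1) * ((J : ℝ) - 1) * C / (1 - κ) := by
    apply div_nonneg _ hκ1'.le
    apply mul_nonneg (mul_nonneg (by linarith) (by linarith)) hC
  have hciR : ∀ i, c j i ≤ R := by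
    intro i
    refine le_trans ?_ (hcR j)
    rw [← Real.sqrt_sq (hc0 j i)]
    exact Real.sqrt_le_sqrt (Finset.single_le_sum (f := fun i => c j i ^ 2) (fun i _ => sq_nonneg _) (Finset.mem_univ i))
  have hak : ∀ (s : ℕ) (k : Fin J), Real.sqrt (∑ i, (y s k i - ystar k i) ^ 2) ≤ a s := by
    intro s k
    rw [ha]
    exact le_ciSup (f := fun k : Fin J => Real.sqrt (∑ i, (y s k i - ystar k i) ^ 2))
      (Set.Finite.bddAbove (Set.finite_range _)) k
  rw [hReg]
  apply Real.sSup_le _ hRHS0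
  rintro v ⟨ybar, hybar, rfl⟩
  have hterm : ∀ t ∈ Finset.Icc 1 T,
      util τ π₀ (c j) ybar (Ym t j) - util τ π₀ (c j) (y t j) (Ym t j)
        ≤ 4 * (R / τ) * C * ((J:ℝ) - 1) * κ ^ (t - 1) := by
    intro t ht
    obtain ⟨ht1, -⟩ := Finset.mem_Icc.mp ht
    set D : ℝ := ((J:ℝ) - 1) * (a t + a (t - 1)) with hD
    have hDt : ∀ i, |Ym t j i - Ym (t - 1) j i| ≤ D := by
      intro i
      have e1 : Ym t j i = ∑ k ∈ Finset.univ.erase j, y t k i := by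
        rw [hYm t j]; exact Finset.sum_apply i _ _
      have e2 : Ym (t - 1) j i = ∑ k ∈ Finset.univ.erase j, y (t - 1) k i := by
        rw [hYm (t - 1) j]; exact Finset.sum_apply i _ _
      rw [e1, e2, ← Finset.sum_sub_distrib]
      refine le_trans (Finset.abs_sum_le_sum_abs _ _) ?_
      have hcard : ((Finset.univ.erase j).card : ℝ) = (J:ℝ) - 1 := by
        rw [Finset.card_erase_of_mem (Finset.mem_univ j), Finset.card_univ, Fintype.card_fin,
          Nat.cast_sub (by omega)]
        norm_num
      calc ∑ k ∈ Finset.univ.erase j, |y t k i - y (t - 1) k i|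
          ≤ ∑ _k ∈ Finset.univ.erase j, (a t + a (t - 1)) := by
            refine Finset.sum_le_sum fun k _ => ?_
            have b1 : |y t k i - ystar k i| ≤ a t :=
              le_trans (abs_le_sqrt_sum (fun i => y t k i - ystar k i) i) (hak t k)
            have b2 : |y (t - 1) k i - ystar k i| ≤ a (t - 1) :=
              le_trans (abs_le_sqrt_sum (fun i => y (t - 1) k i - ystar k i) i) (hak (t - 1) k)
            have e3 : y t k i - y (t - 1) k i
                = (y t k i - ystar k i) - (y (t - 1) k i - ystar k i) := by ring
            rw [e3]
            exact le_trans (abs_sub _ _) (add_le_add b1 b2)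
        _ = ((Finset.univ.erase j).card : ℝ) * (a t + a (t - 1)) := by
            rw [Finset.sum_const, nsmul_eq_mul]
        _ = D := by rw [hcard]
    have hw0b : ∀ i, 0 ≤ c j i - ybar i := fun i => by linarith [(hybar i).2]
    have hwRb : ∀ i, c j i - ybar i ≤ R := fun i => by
      have := (hybar i).1; linarith [hciR i]
    have hw0y : ∀ i, 0 ≤ c j i - y t j i := fun i => by linarith [(hybox t j i).2]
    have hwRy : ∀ i, c j i - y t j i ≤ R := fun i => by
      have := (hybox t j i).1; linarith [hciR i]
    have hlip1 := util_lip hN' τ hτ π₀ (c j) ybar (Ym t j) (Ym (t - 1) j) R D hw0b hwRb hDt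
    have hlip2 := util_lip hN' τ hτ π₀ (c j) (y t j) (Ym t j) (Ym (t - 1) j) R D hw0y hwRy hDt
    have hbrt := hbr t ht1 j ybar hybar
    have step1 : util τ π₀ (c j) ybar (Ym t j) - util τ π₀ (c j) (y t j) (Ym t j)
        ≤ 2 * (R * (D / τ)) := by
      have h1 := abs_le.mp hlip1
      have h2 := abs_le.mp hlip2
      linarith [h1.1, h1.2, h2.1, h2.2, hbrt]
    have hκt : κ ^ t ≤ κ ^ (t - 1) := by
      have e : t = (t - 1) + 1 := by omega
      conv_lhs => rw [e, pow_succ]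
      nlinarith [pow_nonneg hκ0.le (t - 1)]
    have hDle : D ≤ ((J:ℝ) - 1) * (2 * C * κ ^ (t - 1)) := by
      have h1 : a t ≤ C * κ ^ (t - 1) := le_trans (hgeo t)
        (mul_le_mul_of_nonneg_left hκt hC)
      have h2 : a (t - 1) ≤ C * κ ^ (t - 1) := hgeo (t - 1)
      rw [hD]
      apply mul_le_mul_of_nonneg_left _ (by linarith)
      linarith
    calc util τ π₀ (c j) ybar (Ym t j) - util τ π₀ (c j) (y t j) (Ym t j)
        ≤ 2 * (R * (D / τ)) := step1
      _ = 2 * (R / τ) * D := by ring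
      _ ≤ 2 * (R / τ) * (((J:ℝ) - 1) * (2 * C * κ ^ (t - 1))) :=
          mul_le_mul_of_nonneg_left hDle (by linarith)
      _ = 4 * (R / τ) * C * ((J:ℝ) - 1) * κ ^ (t - 1) := by ring
  have hgs : ∑ t ∈ Finset.Icc 1 T, κ ^ (t - 1) ≤ 1 / (1 - κ) := by
    have h1 : ∑ t ∈ Finset.Icc 1 T, κ ^ (t - 1) = ∑ i ∈ Finset.range T, κ ^ i := by
      have e : Finset.Icc 1 T = Finset.Ico 1 (T + 1) := by
        rw [Finset.Ico_add_one_right_eq_Icc]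
      rw [e, Finset.sum_Ico_eq_sum_range]
      simp
    rw [h1, le_div_iff₀ hκ1']
    have h2 := geom_sum_mul κ T
    nlinarith [pow_nonneg hκ0.le T]
  calc ∑ t ∈ Finset.Icc 1 T,
        (util τ π₀ (c j) ybar (Ym t j) - util τ π₀ (c j) (y t j) (Ym t j))
      ≤ ∑ t ∈ Finset.Icc 1 T, 4 * (R / τ) * C * ((J:ℝ) - 1) * κ ^ (t - 1) :=
        Finset.sum_le_sum hterm
    _ = 4 * (R / τ) * C * ((J:ℝ) - 1) * ∑ t ∈ Finset.Icc 1 T, κ ^ (t - 1) := by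
        rw [Finset.mul_sum]
    _ ≤ 4 * (R / τ) * C * ((J:ℝ) - 1) * (1 / (1 - κ)) := by
        apply mul_le_mul_of_nonneg_left hgs
        apply mul_nonneg (mul_nonneg (by linarith) hC) (by linarith)
    _ ≤ 4 * (R / τ + 1) * ((J : ℝ) - 1) * C / (1 - κ) := by
        rw [div_eq_mul_one_div (4 * (R / τ + 1) * ((J : ℝ) - 1) * C) (1 - κ)]
        have h01 : (0:ℝ) ≤ 1 / (1 - κ) := by positivity
        apply mul_le_mul_of_nonneg_right _ h01
        nlinarith [mul_nonneg (sub_nonneg.mpr hJ1) hC]
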